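/- arXiv:2008.05633 — 3 statements merged into one kernel-verified Lean document; each statement's English description precedes it below -/
import Mathlib

section
/- Let k be an odd positive integer. There exists a constant C depending only on k such that for all real λ, ρ, μ with λ > 0, ρ > 0 and λρ − μ² > 0: |∫_{ℝ²} x^k y^k e^{−(λx² + ρy² + 2μxy)/2} dx dy| ≤ C|μ|^k / (λρ − μ²)^{k + 1/2} if μ²/(λρ − μ²) ≥ 1, and |∫_{ℝ²} x^k y^k e^{−(λx² + ρy² + 2μxy)/2} dx dy| ≤ C|μ| / (λρ − μ²)^{k/2 + 1} if μ²/(λρ − μ²) < 1. -/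
open MeasureTheory Real Finset

noncomputable def gmom (n : ℕ) (b : ℝ) : ℝ := ∫ x : ℝ, |x| ^ n * Real.exp (-(b * x ^ 2) / 2)

lemma gmom_integrable {b : ℝ} (hb : 0 < b) (n : ℕ) :
    Integrable fun x : ℝ => |x| ^ n * Real.exp (-(b * x ^ 2) / 2) := by
  have h := (integrable_rpow_mul_exp_neg_mul_sq (b := b / 2) (by linarith)
      (s := (n : ℝ)) (neg_one_lt_zero.trans_le (Nat.cast_nonneg n))).abs
  refine h.congr (Filter.Eventually.of_forall fun x => ?_)
  show |x ^ (n : ℝ) * Real.exp (-(b / 2) * x ^ 2)| = |x| ^ n * Real.exp (-(b * x ^ 2) / 2)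
  rw [abs_mul, abs_of_nonneg (Real.exp_pos _).le, Real.rpow_natCast, abs_pow]
  congr 1
  ring_nf

lemma gmom_nonneg (n : ℕ) (b : ℝ) : 0 ≤ gmom n b :=
  integral_nonneg fun x => by positivity

lemma integrable_exp2 {b : ℝ} (hb : 0 < b) :
    Integrable fun x : ℝ => Real.exp (-(b * x ^ 2) / 2) := by
  simpa using gmom_integrable hb 0

lemma gmom_scale {b : ℝ} (hb : 0 < b) (n : ℕ) :
    gmom n b = (Real.sqrt b ^ (n + 1))⁻¹ * gmom n 1 := by
  have hs : 0 < Real.sqrt b := Real.sqrt_pos.2 hb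
  have h := MeasureTheory.Measure.integral_comp_mul_left
    (fun x : ℝ => |x| ^ n * Real.exp (-(1 * x ^ 2) / 2)) (Real.sqrt b)
  have key : ∀ x : ℝ, |Real.sqrt b * x| ^ n * Real.exp (-(1 * (Real.sqrt b * x) ^ 2) / 2)
      = Real.sqrt b ^ n * (|x| ^ n * Real.exp (-(b * x ^ 2) / 2)) := by
    intro x
    rw [abs_mul, abs_of_nonneg hs.le, mul_pow]
    rw [show (1 : ℝ) * (Real.sqrt b * x) ^ 2 = b * x ^ 2 by
      rw [mul_pow, Real.sq_sqrt hb.le]; ring]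
    ring
  simp only [key] at h
  rw [MeasureTheory.integral_const_mul] at h
  have : Real.sqrt b ^ n * gmom n b = (Real.sqrt b)⁻¹ * gmom n 1 := by
    simpa [gmom, abs_inv, abs_of_pos hs, smul_eq_mul] using h
  have hbn : (Real.sqrt b ^ n : ℝ) ≠ 0 := by positivity
  field_simp at this ⊢
  rw [pow_succ]
  nlinarith [this]

lemma odd_vanish {b : ℝ} (k : ℕ) (hk : Odd k) :
    ∫ x : ℝ, x ^ k * Real.exp (-(b * x ^ 2) / 2) = 0 := by
  have h := MeasureTheory.integral_neg_eq_self
      (fun x : ℝ => x ^ k * Real.exp (-(b * x ^ 2) / 2)) volume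
  simp only [hk.neg_pow, neg_sq, neg_mul, integral_neg] at h
  linarith

lemma add_pow_le' {a b : ℝ} (ha : 0 ≤ a) (hb : 0 ≤ b) (n : ℕ) :
    (a + b) ^ n ≤ 2 ^ n * (a ^ n + b ^ n) := by
  calc (a + b) ^ n ≤ (2 * max a b) ^ n := by
        apply pow_le_pow_left₀ (by positivity)
        rcases le_total a b with h | h
        · rw [max_eq_right h]; linarith
        · rw [max_eq_left h]; linarith
    _ = 2 ^ n * max a b ^ n := mul_pow 2 _ n
    _ ≤ 2 ^ n * (a ^ n + b ^ n) := by
        refine mul_le_mul_of_nonneg_left ?_ (by positivity)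
        rcases le_total a b with h | h
        · rw [max_eq_right h]; exact le_add_of_nonneg_left (pow_nonneg ha n)
        · rw [max_eq_left h]; exact le_add_of_nonneg_right (pow_nonneg hb n)

lemma poly_bound (k : ℕ) (hk0 : 0 < k) (t z : ℝ) :
    |(z - t) ^ k - z ^ k| ≤ k * 2 ^ k * (|t| * |z| ^ (k - 1) + |t| ^ k) := by
  have h := geom_sum₂_mul (z - t) z k
  have h2 : (z - t) ^ k - z ^ k = (∑ i ∈ range k, (z - t) ^ i * z ^ (k - 1 - i)) * (-t) := by
    rw [← h]; ring_nf
  rw [h2, abs_mul, abs_neg]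
  have hsum : |∑ i ∈ range k, (z - t) ^ i * z ^ (k - 1 - i)|
      ≤ k * (|z| + |t|) ^ (k - 1) := by
    calc |∑ i ∈ range k, (z - t) ^ i * z ^ (k - 1 - i)|
        ≤ ∑ i ∈ range k, |(z - t) ^ i * z ^ (k - 1 - i)| := Finset.abs_sum_le_sum_abs _ _
      _ ≤ ∑ _i ∈ range k, (|z| + |t|) ^ (k - 1) := by
          apply Finset.sum_le_sum
          intro i hi
          rw [abs_mul, abs_pow, abs_pow]
          have h1 : |z - t| ≤ |z| + |t| := abs_sub z t
          have hz : |z| ≤ |z| + |t| := le_add_of_nonneg_right (abs_nonneg t)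
          have hmul := mul_le_mul (pow_le_pow_left₀ (abs_nonneg (z - t)) h1 i)
            (pow_le_pow_left₀ (abs_nonneg z) hz (k - 1 - i))
            (by positivity) (by positivity)
          refine hmul.trans ?_
          rw [← pow_add]
          have : i + (k - 1 - i) = k - 1 :=
            Nat.add_sub_cancel' (Nat.le_sub_one_of_lt (Finset.mem_range.1 hi))
          rw [this]
      _ = k * (|z| + |t|) ^ (k - 1) := by
          rw [Finset.sum_const, Finset.card_range, nsmul_eq_mul]
  have hpow : (|z| + |t|) ^ (k - 1) ≤ 2 ^ (k - 1) * (|z| ^ (k - 1) + |t| ^ (k - 1)) :=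
    add_pow_le' (abs_nonneg z) (abs_nonneg t) (k - 1)
  have htk : |t| ^ (k - 1) * |t| = |t| ^ k := by
    rw [← pow_succ, Nat.sub_add_cancel hk0]
  have h2k : (2 : ℝ) ^ (k - 1) ≤ 2 ^ k := pow_le_pow_right₀ (by norm_num) (Nat.sub_le k 1)
  calc |∑ i ∈ range k, (z - t) ^ i * z ^ (k - 1 - i)| * |t|
      ≤ (k * (|z| + |t|) ^ (k - 1)) * |t| :=
        mul_le_mul_of_nonneg_right hsum (abs_nonneg t)
    _ ≤ (k * (2 ^ (k - 1) * (|z| ^ (k - 1) + |t| ^ (k - 1)))) * |t| := by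
        refine mul_le_mul_of_nonneg_right
          (mul_le_mul_of_nonneg_left hpow (Nat.cast_nonneg k)) (abs_nonneg t)
    _ ≤ (k * (2 ^ k * (|z| ^ (k - 1) + |t| ^ (k - 1)))) * |t| := by
        have : (0:ℝ) ≤ |z| ^ (k - 1) + |t| ^ (k - 1) := by positivity
        refine mul_le_mul_of_nonneg_right (mul_le_mul_of_nonneg_left
          (mul_le_mul_of_nonneg_right h2k this) (Nat.cast_nonneg k)) (abs_nonneg t)
    _ = k * 2 ^ k * (|t| * |z| ^ (k - 1) + |t| ^ (k - 1) * |t|) := by ring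
    _ = k * 2 ^ k * (|t| * |z| ^ (k - 1) + |t| ^ k) := by rw [htk]

lemma integrable_shift_pow {b : ℝ} (hb : 0 < b) (k : ℕ) (t : ℝ) :
    Integrable fun z : ℝ => (z - t) ^ k * Real.exp (-(b * z ^ 2) / 2) := by
  have hmaj : Integrable fun z : ℝ =>
      2 ^ k * (|z| ^ k * Real.exp (-(b * z ^ 2) / 2))
        + (2 ^ k * |t| ^ k) * Real.exp (-(b * z ^ 2) / 2) :=
    ((gmom_integrable hb k).const_mul _).add ((integrable_exp2 hb).const_mul _)
  refine hmaj.mono' (Continuous.aestronglyMeasurable (by fun_prop))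
    (Filter.Eventually.of_forall fun z => ?_)
  rw [norm_mul, norm_pow, Real.norm_eq_abs, Real.norm_eq_abs,
    abs_of_nonneg (Real.exp_pos _).le]
  have h1 : |z - t| ^ k ≤ 2 ^ k * (|z| ^ k + |t| ^ k) :=
    (pow_le_pow_left₀ (abs_nonneg _) (abs_sub z t) k).trans
      (add_pow_le' (abs_nonneg z) (abs_nonneg t) k)
  calc |z - t| ^ k * Real.exp (-(b * z ^ 2) / 2)
      ≤ (2 ^ k * (|z| ^ k + |t| ^ k)) * Real.exp (-(b * z ^ 2) / 2) :=
        mul_le_mul_of_nonneg_right h1 (Real.exp_pos _).le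
    _ = 2 ^ k * (|z| ^ k * Real.exp (-(b * z ^ 2) / 2))
        + (2 ^ k * |t| ^ k) * Real.exp (-(b * z ^ 2) / 2) := by ring

lemma integrable_pow_exp2 {b : ℝ} (hb : 0 < b) (k : ℕ) :
    Integrable fun z : ℝ => z ^ k * Real.exp (-(b * z ^ 2) / 2) := by
  simpa using integrable_shift_pow hb k 0

lemma inner_bound {b : ℝ} (hb : 0 < b) (k : ℕ) (hk0 : 0 < k) (hk : Odd k) (t : ℝ) :
    |∫ y : ℝ, y ^ k * Real.exp (-(b * (y + t) ^ 2) / 2)|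
      ≤ k * 2 ^ k * (|t| * gmom (k - 1) b + |t| ^ k * gmom 0 b) := by
  have htr := MeasureTheory.integral_add_right_eq_self
      (μ := volume) (fun z : ℝ => (z - t) ^ k * Real.exp (-(b * z ^ 2) / 2)) t
  simp only [add_sub_cancel_right] at htr
  have h0 := odd_vanish (b := b) k hk
  have hsub : ∫ z : ℝ, ((z - t) ^ k - z ^ k) * Real.exp (-(b * z ^ 2) / 2)
      = ∫ z : ℝ, (z - t) ^ k * Real.exp (-(b * z ^ 2) / 2) := by
    simp_rw [sub_mul]
    rw [MeasureTheory.integral_sub (integrable_shift_pow hb k t)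
      (integrable_pow_exp2 hb k), h0, sub_zero]
  rw [htr, ← hsub]
  have hmaj : Integrable fun z : ℝ =>
      (k * 2 ^ k * |t|) * (|z| ^ (k - 1) * Real.exp (-(b * z ^ 2) / 2))
        + (k * 2 ^ k * |t| ^ k) * Real.exp (-(b * z ^ 2) / 2) :=
    ((gmom_integrable hb (k - 1)).const_mul _).add ((integrable_exp2 hb).const_mul _)
  rw [← Real.norm_eq_abs]
  refine (MeasureTheory.norm_integral_le_of_norm_le hmaj
    (Filter.Eventually.of_forall (fun z => ?_))).trans (le_of_eq ?_)
  case _ =>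
    rw [norm_mul, Real.norm_eq_abs, Real.norm_eq_abs, abs_of_nonneg (Real.exp_pos _).le]
    calc |(z - t) ^ k - z ^ k| * Real.exp (-(b * z ^ 2) / 2)
        ≤ (k * 2 ^ k * (|t| * |z| ^ (k - 1) + |t| ^ k)) * Real.exp (-(b * z ^ 2) / 2) :=
          mul_le_mul_of_nonneg_right (poly_bound k hk0 t z) (Real.exp_pos _).le
      _ = (k * 2 ^ k * |t|) * (|z| ^ (k - 1) * Real.exp (-(b * z ^ 2) / 2))
          + (k * 2 ^ k * |t| ^ k) * Real.exp (-(b * z ^ 2) / 2) := by ring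
  case _ =>
    rw [MeasureTheory.integral_add (((gmom_integrable hb (k - 1)).const_mul _))
      ((integrable_exp2 hb).const_mul _), MeasureTheory.integral_const_mul,
      MeasureTheory.integral_const_mul]
    have hg0 : (∫ z : ℝ, Real.exp (-(b * z ^ 2) / 2)) = gmom 0 b := by
      simp [gmom]
    rw [hg0]
    show _ = (k : ℝ) * 2 ^ k * (|t| * gmom (k - 1) b + |t| ^ k * gmom 0 b)
    unfold gmom
    ring


set_option maxHeartbeats 1000000 in
/-- **Lemma 2.1 (i).** Bounds for the Gaussian-type double integral
`∫_{ℝ²} x^k y^k e^{−(λx² + ρy² + 2μxy)/2} dx dy` when `k` is odd, for a positive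
definite quadratic form (`λ > 0`, `ρ > 0`, `λρ − μ² > 0`). -/
theorem gaussian_double_integral_odd (k : ℕ) (hk0 : 0 < k) (hk : Odd k) :
    ∃ C : ℝ, ∀ lam rho mu : ℝ, 0 < lam → 0 < rho → 0 < lam * rho - mu ^ 2 →
      (1 ≤ mu ^ 2 / (lam * rho - mu ^ 2) →
        |∫ p : ℝ × ℝ, p.1 ^ k * p.2 ^ k *
            Real.exp (-(lam * p.1 ^ 2 + rho * p.2 ^ 2 + 2 * mu * p.1 * p.2) / 2)|
          ≤ C * |mu| ^ k / (lam * rho - mu ^ 2) ^ ((k : ℝ) + 1 / 2)) ∧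
      (mu ^ 2 / (lam * rho - mu ^ 2) < 1 →
        |∫ p : ℝ × ℝ, p.1 ^ k * p.2 ^ k *
            Real.exp (-(lam * p.1 ^ 2 + rho * p.2 ^ 2 + 2 * mu * p.1 * p.2) / 2)|
          ≤ C * |mu| / (lam * rho - mu ^ 2) ^ ((k : ℝ) / 2 + 1)) := by
  classical
  set G : ℕ → ℝ := fun n => gmom n 1 with hGdef
  have hGnn : ∀ n, 0 ≤ G n := fun n => gmom_nonneg n 1
  refine ⟨(k : ℝ) * 2 ^ k * (G (k - 1) * G (k + 1) + G 0 * G (2 * k)), ?_⟩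
  intro lam rho mu hlam hrho hD
  set D : ℝ := lam * rho - mu ^ 2 with hDdef
  set s : ℝ := Real.sqrt D with hsdef
  have hs : 0 < s := Real.sqrt_pos.2 hD
  set a : ℝ := Real.sqrt rho with hadef
  have ha : 0 < a := Real.sqrt_pos.2 hrho
  have hsq : rho = a ^ 2 := (Real.sq_sqrt hrho.le).symm
  set c : ℝ := mu / rho with hcdef
  set b1 : ℝ := D / rho with hb1def
  have hb1 : 0 < b1 := div_pos hD hrho
  have hb1s : Real.sqrt b1 = s / a := Real.sqrt_div hD.le rho
  have hk1 : k - 1 + 1 = k := Nat.sub_add_cancel hk0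
  -- pointwise factorization
  have hfe : ∀ x y : ℝ,
      x ^ k * y ^ k * Real.exp (-(lam * x ^ 2 + rho * y ^ 2 + 2 * mu * x * y) / 2)
      = (x ^ k * Real.exp (-(b1 * x ^ 2) / 2)) *
          (y ^ k * Real.exp (-(rho * (y + c * x) ^ 2) / 2)) := by
    intro x y
    rw [show -(lam * x ^ 2 + rho * y ^ 2 + 2 * mu * x * y) / 2
        = -(b1 * x ^ 2) / 2 + -(rho * (y + c * x) ^ 2) / 2 by
      rw [hb1def, hcdef, hDdef]; field_simp; ring, Real.exp_add]
    ring
  -- integrability of the 2D integrand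
  set ε : ℝ := D / (lam + rho) with hεdef
  have hε : 0 < ε := div_pos hD (by linarith)
  have hQ : ∀ x y : ℝ, ε * (x ^ 2 + y ^ 2)
      ≤ lam * x ^ 2 + rho * y ^ 2 + 2 * mu * x * y := by
    intro x y
    rw [hεdef, div_mul_eq_mul_div, div_le_iff₀ (by linarith)]
    nlinarith [sq_nonneg (lam * x + mu * y), sq_nonneg (mu * x + rho * y)]
  have hmaj2 : Integrable (fun p : ℝ × ℝ =>
      (|p.1| ^ k * Real.exp (-(ε * p.1 ^ 2) / 2)) *
        (|p.2| ^ k * Real.exp (-(ε * p.2 ^ 2) / 2))) := by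
    rw [MeasureTheory.Measure.volume_eq_prod]
    exact (gmom_integrable hε k).mul_prod (gmom_integrable hε k)
  have hfint : Integrable (fun p : ℝ × ℝ => p.1 ^ k * p.2 ^ k *
      Real.exp (-(lam * p.1 ^ 2 + rho * p.2 ^ 2 + 2 * mu * p.1 * p.2) / 2)) := by
    refine hmaj2.mono' (Continuous.aestronglyMeasurable (by fun_prop))
      (Filter.Eventually.of_forall fun p => ?_)
    rw [norm_mul, norm_mul, norm_pow, norm_pow, Real.norm_eq_abs, Real.norm_eq_abs,
      Real.norm_eq_abs, abs_of_nonneg (Real.exp_pos _).le]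
    have hexp : Real.exp (-(lam * p.1 ^ 2 + rho * p.2 ^ 2 + 2 * mu * p.1 * p.2) / 2)
        ≤ Real.exp (-(ε * p.1 ^ 2) / 2) * Real.exp (-(ε * p.2 ^ 2) / 2) := by
      rw [← Real.exp_add]
      apply Real.exp_le_exp.2
      nlinarith [hQ p.1 p.2]
    calc |p.1| ^ k * |p.2| ^ k *
          Real.exp (-(lam * p.1 ^ 2 + rho * p.2 ^ 2 + 2 * mu * p.1 * p.2) / 2)
        ≤ |p.1| ^ k * |p.2| ^ k *
          (Real.exp (-(ε * p.1 ^ 2) / 2) * Real.exp (-(ε * p.2 ^ 2) / 2)) := by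
          refine mul_le_mul_of_nonneg_left hexp (by positivity)
      _ = (|p.1| ^ k * Real.exp (-(ε * p.1 ^ 2) / 2)) *
          (|p.2| ^ k * Real.exp (-(ε * p.2 ^ 2) / 2)) := by ring
  -- Fubini
  have hI : (∫ p : ℝ × ℝ, p.1 ^ k * p.2 ^ k *
      Real.exp (-(lam * p.1 ^ 2 + rho * p.2 ^ 2 + 2 * mu * p.1 * p.2) / 2))
      = ∫ x : ℝ, (x ^ k * Real.exp (-(b1 * x ^ 2) / 2)) *
          ∫ y : ℝ, y ^ k * Real.exp (-(rho * (y + c * x) ^ 2) / 2) := by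
    rw [MeasureTheory.Measure.volume_eq_prod] at hfint ⊢
    rw [MeasureTheory.integral_prod _ hfint]
    refine integral_congr_ae (Filter.Eventually.of_forall fun x => ?_)
    simp only [hfe]
    rw [MeasureTheory.integral_const_mul]
  -- bound the outer integral
  have hmajout : Integrable (fun x : ℝ =>
      ((k : ℝ) * 2 ^ k * |c| * gmom (k - 1) rho) *
          (|x| ^ (k + 1) * Real.exp (-(b1 * x ^ 2) / 2))
        + ((k : ℝ) * 2 ^ k * |c| ^ k * gmom 0 rho) *
          (|x| ^ (2 * k) * Real.exp (-(b1 * x ^ 2) / 2))) :=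
    ((gmom_integrable hb1 (k + 1)).const_mul _).add
      ((gmom_integrable hb1 (2 * k)).const_mul _)
  have KEY : |∫ p : ℝ × ℝ, p.1 ^ k * p.2 ^ k *
      Real.exp (-(lam * p.1 ^ 2 + rho * p.2 ^ 2 + 2 * mu * p.1 * p.2) / 2)|
      ≤ (k : ℝ) * 2 ^ k * (G (k - 1) * G (k + 1) * (|mu| / s ^ (k + 2))
          + G 0 * G (2 * k) * (|mu| ^ k / s ^ (2 * k + 1))) := by
    rw [hI, ← Real.norm_eq_abs]
    refine (MeasureTheory.norm_integral_le_of_norm_le hmajout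
      (Filter.Eventually.of_forall fun x => ?_)).trans (le_of_eq ?_)
    · rw [norm_mul, norm_mul, norm_pow, Real.norm_eq_abs, Real.norm_eq_abs,
        Real.norm_eq_abs, abs_of_nonneg (Real.exp_pos _).le]
      have hin := inner_bound hrho k hk0 hk (c * x)
      calc |x| ^ k * Real.exp (-(b1 * x ^ 2) / 2) *
            |∫ y : ℝ, y ^ k * Real.exp (-(rho * (y + c * x) ^ 2) / 2)|
          ≤ |x| ^ k * Real.exp (-(b1 * x ^ 2) / 2) *
            ((k : ℝ) * 2 ^ k * (|c * x| * gmom (k - 1) rho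
              + |c * x| ^ k * gmom 0 rho)) := by
            refine mul_le_mul_of_nonneg_left hin (by positivity)
        _ = ((k : ℝ) * 2 ^ k * |c| * gmom (k - 1) rho) *
              (|x| ^ (k + 1) * Real.exp (-(b1 * x ^ 2) / 2))
            + ((k : ℝ) * 2 ^ k * |c| ^ k * gmom 0 rho) *
              (|x| ^ (2 * k) * Real.exp (-(b1 * x ^ 2) / 2)) := by
            rw [abs_mul, mul_pow]
            ring
    · rw [MeasureTheory.integral_add ((gmom_integrable hb1 (k + 1)).const_mul _)
        ((gmom_integrable hb1 (2 * k)).const_mul _),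
        MeasureTheory.integral_const_mul, MeasureTheory.integral_const_mul]
      show ((k : ℝ) * 2 ^ k * |c| * gmom (k - 1) rho) * gmom (k + 1) b1
          + ((k : ℝ) * 2 ^ k * |c| ^ k * gmom 0 rho) * gmom (2 * k) b1 = _
      rw [gmom_scale hrho (k - 1), gmom_scale hrho 0, gmom_scale hb1 (k + 1),
        gmom_scale hb1 (2 * k), hb1s, hk1]
      rw [hcdef, abs_div, abs_of_pos hrho]
      rw [show |mu| / rho = |mu| / a ^ 2 by rw [← hsq]]
      rw [show (Real.sqrt rho : ℝ) = a from rfl]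
      have ha' : a ≠ 0 := ha.ne'
      simp only [hGdef, div_pow]
      field_simp
      ring
  have hsn : ∀ n : ℕ, D ^ ((n : ℝ) / 2) = s ^ n := by
    intro n
    rw [hsdef, Real.sqrt_eq_rpow, ← Real.rpow_natCast (D ^ ((1 : ℝ) / 2)) n,
      ← Real.rpow_mul hD.le]
    congr 1
    ring
  have hpow1 : D ^ ((k : ℝ) + 1 / 2) = s ^ (2 * k + 1) := by
    rw [← hsn (2 * k + 1)]; congr 1; push_cast; ring
  have hpow2 : D ^ ((k : ℝ) / 2 + 1) = s ^ (k + 2) := by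
    rw [← hsn (k + 2)]; congr 1; push_cast; ring
  have hC1 : (0 : ℝ) ≤ G (k - 1) * G (k + 1) := mul_nonneg (hGnn _) (hGnn _)
  have hC2 : (0 : ℝ) ≤ G 0 * G (2 * k) := mul_nonneg (hGnn _) (hGnn _)
  constructor
  · intro hcase
    have hmu2 : D ≤ mu ^ 2 := (one_le_div hD).1 hcase
    have hsmu : s ≤ |mu| := by
      rw [hsdef, ← Real.sqrt_sq_eq_abs]
      exact Real.sqrt_le_sqrt hmu2
    have hT1 : |mu| / s ^ (k + 2) ≤ |mu| ^ k / s ^ (2 * k + 1) := by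
      rw [div_le_div_iff₀ (by positivity) (by positivity)]
      have h1 : s ^ (2 * k + 1) = s ^ (k - 1) * s ^ (k + 2) := by
        rw [← pow_add]; congr 1; omega
      have h2 : s ^ (k - 1) ≤ |mu| ^ (k - 1) := pow_le_pow_left₀ hs.le hsmu _
      calc |mu| * s ^ (2 * k + 1) = (|mu| * s ^ (k - 1)) * s ^ (k + 2) := by rw [h1]; ring
        _ ≤ (|mu| * |mu| ^ (k - 1)) * s ^ (k + 2) := by
            refine mul_le_mul_of_nonneg_right
              (mul_le_mul_of_nonneg_left h2 (abs_nonneg mu)) (by positivity)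
        _ = |mu| ^ k * s ^ (k + 2) := by
            rw [show |mu| * |mu| ^ (k - 1) = |mu| ^ k by rw [← pow_succ', hk1]]
    rw [hpow1, mul_div_assoc]
    refine KEY.trans ?_
    have step : G (k - 1) * G (k + 1) * (|mu| / s ^ (k + 2))
        + G 0 * G (2 * k) * (|mu| ^ k / s ^ (2 * k + 1))
        ≤ (G (k - 1) * G (k + 1) + G 0 * G (2 * k)) * (|mu| ^ k / s ^ (2 * k + 1)) := by
      rw [add_mul]
      exact add_le_add_left (mul_le_mul_of_nonneg_left hT1 hC1) _
    calc (k : ℝ) * 2 ^ k * (G (k - 1) * G (k + 1) * (|mu| / s ^ (k + 2))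
          + G 0 * G (2 * k) * (|mu| ^ k / s ^ (2 * k + 1)))
        ≤ (k : ℝ) * 2 ^ k * ((G (k - 1) * G (k + 1) + G 0 * G (2 * k))
            * (|mu| ^ k / s ^ (2 * k + 1))) := by
          refine mul_le_mul_of_nonneg_left step (by positivity)
      _ = (k : ℝ) * 2 ^ k * (G (k - 1) * G (k + 1) + G 0 * G (2 * k))
            * (|mu| ^ k / s ^ (2 * k + 1)) := by ring
  · intro hcase
    have hmu2 : mu ^ 2 ≤ D := ((div_lt_one hD).1 hcase).le
    have hsmu : |mu| ≤ s := by
      rw [hsdef, ← Real.sqrt_sq_eq_abs]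
      exact Real.sqrt_le_sqrt hmu2
    have hT2 : |mu| ^ k / s ^ (2 * k + 1) ≤ |mu| / s ^ (k + 2) := by
      rw [div_le_div_iff₀ (by positivity) (by positivity)]
      have h1 : s ^ (2 * k + 1) = s ^ (k - 1) * s ^ (k + 2) := by
        rw [← pow_add]; congr 1; omega
      have h2 : |mu| ^ (k - 1) ≤ s ^ (k - 1) := pow_le_pow_left₀ (abs_nonneg mu) hsmu _
      calc |mu| ^ k * s ^ (k + 2) = (|mu| * |mu| ^ (k - 1)) * s ^ (k + 2) := by
            rw [show |mu| * |mu| ^ (k - 1) = |mu| ^ k by rw [← pow_succ', hk1]]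
        _ ≤ (|mu| * s ^ (k - 1)) * s ^ (k + 2) := by
            refine mul_le_mul_of_nonneg_right
              (mul_le_mul_of_nonneg_left h2 (abs_nonneg mu)) (by positivity)
        _ = |mu| * s ^ (2 * k + 1) := by rw [h1]; ring
    rw [hpow2, mul_div_assoc]
    refine KEY.trans ?_
    have step : G (k - 1) * G (k + 1) * (|mu| / s ^ (k + 2))
        + G 0 * G (2 * k) * (|mu| ^ k / s ^ (2 * k + 1))
        ≤ (G (k - 1) * G (k + 1) + G 0 * G (2 * k)) * (|mu| / s ^ (k + 2)) := by
      rw [add_mul]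
      exact add_le_add_right (mul_le_mul_of_nonneg_left hT2 hC2) _
    calc (k : ℝ) * 2 ^ k * (G (k - 1) * G (k + 1) * (|mu| / s ^ (k + 2))
          + G 0 * G (2 * k) * (|mu| ^ k / s ^ (2 * k + 1)))
        ≤ (k : ℝ) * 2 ^ k * ((G (k - 1) * G (k + 1) + G 0 * G (2 * k))
            * (|mu| / s ^ (k + 2))) := by
          refine mul_le_mul_of_nonneg_left step (by positivity)
      _ = (k : ℝ) * 2 ^ k * (G (k - 1) * G (k + 1) + G 0 * G (2 * k))
            * (|mu| / s ^ (k + 2)) := by ring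
end

section
/- Fix H ∈ (0,1). There exists a constant K₃ > 0 depending only on H such that for all 0 ≤ r < s < r' < s', writing a = s − r, b = r' − s, c = s' − r', λ = (s−r)^{2H}, ρ = (s'−r')^{2H} and μ = (1/2)(|s'−r|^{2H} + |s−r'|^{2H} − |s'−s|^{2H} − |r−r'|^{2H}), one has λρ − μ² ≥ K₃ (ac)^{2H}, and moreover 2μ = (a+b+c)^{2H} + b^{2H} − (a+b)^{2H} − (c+b)^{2H}. -/
open Real

lemma rpow_subadd (x y q : ℝ) (hx : 0 ≤ x) (hy : 0 ≤ y) (hq0 : 0 ≤ q) (hq1 : q ≤ 1) :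
    (x + y) ^ q ≤ x ^ q + y ^ q := by
  have h := NNReal.rpow_add_le_add_rpow (x.toNNReal) (y.toNNReal) hq0 hq1
  have h1 : ((x.toNNReal : ℝ)) = x := Real.coe_toNNReal x hx
  have h2 : ((y.toNNReal : ℝ)) = y := Real.coe_toNNReal y hy
  calc (x + y) ^ q = ((x.toNNReal : ℝ) + (y.toNNReal : ℝ)) ^ q := by rw [h1, h2]
    _ = (((x.toNNReal + y.toNNReal) ^ q : NNReal) : ℝ) := by
        rw [NNReal.coe_rpow, NNReal.coe_add]
    _ ≤ ((x.toNNReal ^ q + y.toNNReal ^ q : NNReal) : ℝ) := NNReal.coe_le_coe.2 h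
    _ = x ^ q + y ^ q := by rw [NNReal.coe_add, NNReal.coe_rpow, NNReal.coe_rpow, h1, h2]

lemma mvt_rpow (p a b c : ℝ) (hp : 0 < p) (ha : 0 < a) (hb : 0 < b) (hc : 0 < c) :
    ∃ ξ, b < ξ ∧ ξ < b + c ∧
      (a+b+c)^p + b^p - (a+b)^p - (b+c)^p = p * ((ξ+a)^(p-1) - ξ^(p-1)) * c := by
  set g : ℝ → ℝ := fun x => (x + a) ^ p - x ^ p with hg
  set g' : ℝ → ℝ := fun x => p * ((x + a) ^ (p-1) - x ^ (p-1)) with hg'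
  have hderiv : ∀ x : ℝ, 0 < x → HasDerivAt g (g' x) x := by
    intro x hx
    have h1 : HasDerivAt (fun y : ℝ => y + a) 1 x := (hasDerivAt_id x).add_const a
    have h2 : HasDerivAt (fun y : ℝ => y ^ p) (p * (x + a) ^ (p-1)) (x + a) :=
      Real.hasDerivAt_rpow_const (Or.inl (by positivity))
    have h3 := h2.comp x h1
    have h4 : HasDerivAt (fun y : ℝ => y ^ p) (p * x ^ (p-1)) x :=
      Real.hasDerivAt_rpow_const (Or.inl hx.ne')
    have h5 := h3.sub h4
    simp only [mul_one] at h5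
    refine h5.congr_deriv ?_
    simp only [hg']; ring
  have hcont : ContinuousOn g (Set.Icc b (b + c)) := fun x hx =>
    (hderiv x (lt_of_lt_of_le hb hx.1)).continuousAt.continuousWithinAt
  obtain ⟨ξ, hmem, heq⟩ := exists_hasDerivAt_eq_slope g g' (by linarith) hcont
    (fun x hx => hderiv x (lt_trans hb hx.1))
  refine ⟨ξ, hmem.1, hmem.2, ?_⟩
  rw [show b + c - b = c from by ring] at heq
  rw [eq_div_iff hc.ne'] at heq
  simp only [hg, hg'] at heq
  rw [show b + c + a = a + b + c from by ring, show b + a = a + b from by ring] at heq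
  linarith

lemma key_ineq (H a b c : ℝ) (hH0 : 0 < H) (hH1 : H < 1)
    (ha : 0 < a) (hb : 0 < b) (hc : 0 < c) :
    a ^ (2*H) * c ^ (2*H)
      - ((1/2) * ((a+b+c)^(2*H) + b^(2*H) - (c+b)^(2*H) - (a+b)^(2*H)))^2
    ≥ (1 - max (1/4) (H^2)) * (a*c)^(2*H) := by
  set p := 2*H with hpdef
  have hp0 : 0 < p := by positivity
  have hp2 : p < 2 := by simp only [hpdef]; linarith
  have hcb : (c+b)^p = (b+c)^p := by rw [add_comm]
  set D : ℝ := (a+b+c)^p + b^p - (a+b)^p - (b+c)^p with hD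
  have hmul : (a*c)^p = a^p * c^p := Real.mul_rpow ha.le hc.le
  have hapos : (0:ℝ) < a^p := Real.rpow_pos_of_pos ha p
  have hcpos : (0:ℝ) < c^p := Real.rpow_pos_of_pos hc p
  have hM4 : (1/4 : ℝ) ≤ max (1/4) (H^2) := le_max_left _ _
  have hMH : H^2 ≤ max (1/4) (H^2) := le_max_right _ _
  -- main estimate: D^2 ≤ 4 * max (1/4) (H^2) * (a^p * c^p)
  have hDsq : D^2 ≤ 4 * max (1/4) (H^2) * (a^p * c^p) := by
    obtain ⟨ξ, hξ1, hξ2, hrepr⟩ := mvt_rpow p a b c hp0 ha hb hc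
    obtain ⟨η, hη1, hη2, hrepr'⟩ := mvt_rpow p c b a hp0 hc hb ha
    have hrepr2 : D = p * ((η+c)^(p-1) - η^(p-1)) * a := by
      rw [hD, show a+b+c = c+b+a from by ring, show a+b = b+a from by ring,
        show b+c = c+b from by ring]
      linarith [hrepr']
    have hξ0 : 0 < ξ := lt_trans hb hξ1
    have hη0 : 0 < η := lt_trans hb hη1
    rcases le_or_gt 1 p with hp1 | hp1
    · -- p ≥ 1 : 0 ≤ D ≤ p c a^{p-1} and D ≤ p a c^{p-1}
      have hq0 : (0:ℝ) ≤ p - 1 := by linarith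
      have hq1 : p - 1 ≤ 1 := by linarith
      have hub1 : (ξ+a)^(p-1) - ξ^(p-1) ≤ a^(p-1) := by
        have := rpow_subadd ξ a (p-1) hξ0.le ha.le hq0 hq1
        linarith
      have hlb1 : ξ^(p-1) ≤ (ξ+a)^(p-1) :=
        Real.rpow_le_rpow hξ0.le (by linarith) hq0
      have hub2 : (η+c)^(p-1) - η^(p-1) ≤ c^(p-1) := by
        have := rpow_subadd η c (p-1) hη0.le hc.le hq0 hq1
        linarith
      have hD0 : 0 ≤ D := by
        rw [hD, hrepr]
        have : 0 ≤ (ξ+a)^(p-1) - ξ^(p-1) := by linarith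
        positivity
      have hDle1 : D ≤ p * a^(p-1) * c := by
        rw [hD, hrepr]
        have h' : p * ((ξ+a)^(p-1) - ξ^(p-1)) ≤ p * a^(p-1) :=
          mul_le_mul_of_nonneg_left hub1 hp0.le
        exact mul_le_mul_of_nonneg_right h' hc.le
      have hDle2 : D ≤ p * c^(p-1) * a := by
        rw [hrepr2]
        have h' : p * ((η+c)^(p-1) - η^(p-1)) ≤ p * c^(p-1) :=
          mul_le_mul_of_nonneg_left hub2 hp0.le
        exact mul_le_mul_of_nonneg_right h' ha.le
      have hsplit_a : a^(p-1) * a = a^p := by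
        rw [← Real.rpow_add_one ha.ne' (p-1)]; ring_nf
      have hsplit_c : c^(p-1) * c = c^p := by
        rw [← Real.rpow_add_one hc.ne' (p-1)]; ring_nf
      have h1 : D^2 ≤ (p * a^(p-1) * c) * (p * c^(p-1) * a) := by
        have := mul_le_mul hDle1 hDle2 hD0 (le_trans hD0 hDle1)
        calc D^2 = D * D := sq D
          _ ≤ _ := this
      have h2 : (p * a^(p-1) * c) * (p * c^(p-1) * a) = p^2 * (a^p * c^p) := by
        rw [← hsplit_a, ← hsplit_c]; ring
      have h3 : p^2 ≤ 4 * max (1/4) (H^2) := by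
        have : p^2 = 4 * H^2 := by rw [hpdef]; ring
        rw [this]; linarith
      calc D^2 ≤ p^2 * (a^p * c^p) := by rw [← h2]; exact h1
        _ ≤ 4 * max (1/4) (H^2) * (a^p * c^p) :=
          mul_le_mul_of_nonneg_right h3 (by positivity)
    · -- p < 1 : D ≤ 0 and -D ≤ a^p, -D ≤ c^p
      have hD0 : D ≤ 0 := by
        rw [hD, hrepr]
        have hle : (ξ+a)^(p-1) ≤ ξ^(p-1) :=
          Real.rpow_le_rpow_of_nonpos hξ0 (by linarith) (by linarith)
        have h1 : (ξ+a)^(p-1) - ξ^(p-1) ≤ 0 := by linarith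
        have := mul_le_mul_of_nonneg_left h1 hp0.le
        have := mul_le_mul_of_nonneg_right this hc.le
        simpa using this
      have hub1 : -D ≤ a^p := by
        have hsub : (a+b)^p ≤ a^p + b^p := rpow_subadd a b p ha.le hb.le hp0.le hp1.le
        have hmon : (b+c)^p ≤ (a+b+c)^p :=
          Real.rpow_le_rpow (by linarith) (by linarith) hp0.le
        simp only [hD]; linarith
      have hub2 : -D ≤ c^p := by
        have hsub : (b+c)^p ≤ b^p + c^p := rpow_subadd b c p hb.le hc.le hp0.le hp1.le
        have hmon : (a+b)^p ≤ (a+b+c)^p :=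
          Real.rpow_le_rpow (by positivity) (by linarith) hp0.le
        simp only [hD]; linarith
      have h1 : D^2 ≤ a^p * c^p := by
        have h0 : 0 ≤ -D := by linarith
        calc D^2 = (-D) * (-D) := by ring
          _ ≤ a^p * c^p := mul_le_mul hub1 hub2 h0 hapos.le
      calc D^2 ≤ a^p * c^p := h1
        _ = 4 * (1/4) * (a^p * c^p) := by ring
        _ ≤ 4 * max (1/4) (H^2) * (a^p * c^p) := by
            have : (0:ℝ) ≤ a^p * c^p := by positivity
            nlinarith
  -- conclude
  rw [hcb, hmul]
  have hexp : ((1/2) * ((a+b+c)^p + b^p - (b+c)^p - (a+b)^p))^2 = D^2 / 4 := by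
    rw [hD]; ring
  rw [hexp]
  nlinarith [hDsq]

/-- **Lemma 2.2, Case (iii).** -/
theorem var_cov_bound_case3 (H : ℝ) (hH0 : 0 < H) (hH1 : H < 1) :
    ∃ K₃ : ℝ, 0 < K₃ ∧ ∀ r s r' s' : ℝ, 0 ≤ r → r < s → s < r' → r' < s' →
      ((s - r) ^ (2 * H) * (s' - r') ^ (2 * H)
          - ((1 / 2) * (|s' - r| ^ (2 * H) + |s - r'| ^ (2 * H)
              - |s' - s| ^ (2 * H) - |r - r'| ^ (2 * H))) ^ 2
        ≥ K₃ * ((s - r) * (s' - r')) ^ (2 * H))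
      ∧ 2 * ((1 / 2) * (|s' - r| ^ (2 * H) + |s - r'| ^ (2 * H)
              - |s' - s| ^ (2 * H) - |r - r'| ^ (2 * H)))
        = ((s - r) + (r' - s) + (s' - r')) ^ (2 * H) + (r' - s) ^ (2 * H)
            - ((s - r) + (r' - s)) ^ (2 * H) - ((s' - r') + (r' - s)) ^ (2 * H) := by
  refine ⟨1 - max (1/4) (H^2), ?_, ?_⟩
  · have h1 : (1/4 : ℝ) < 1 := by norm_num
    have h2 : H^2 < 1 := by nlinarith
    have : max (1/4 : ℝ) (H^2) < 1 := max_lt h1 h2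
    linarith
  intro r s r' s' hr hrs hsr hr's
  have h1 : |s' - r| = (s - r) + (r' - s) + (s' - r') := by
    rw [abs_of_pos (by linarith : (0:ℝ) < s' - r)]; ring
  have h2 : |s - r'| = r' - s := by
    rw [abs_of_neg (by linarith : s - r' < 0)]; ring
  have h3 : |s' - s| = (s' - r') + (r' - s) := by
    rw [abs_of_pos (by linarith : (0:ℝ) < s' - s)]; ring
  have h4 : |r - r'| = (s - r) + (r' - s) := by
    rw [abs_of_neg (by linarith : r - r' < 0)]; ring
  rw [h1, h2, h3, h4]
  constructor
  · exact key_ineq H (s - r) (r' - s) (s' - r') hH0 hH1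
      (by linarith) (by linarith) (by linarith)
  · ring
end

section
/- There exists a universal constant C > 0 such that for all ε > 0 and all a, b, c ≥ 0, writing μ = (1/2)((a+b+c)^{4/3} + b^{4/3} − a^{4/3} − c^{4/3}), one has (ε + (a+b)^{4/3})(ε + (b+c)^{4/3}) − μ² ≥ C (a+b)^{2/3} (b+c)^{2/3} (ε + (ac)^{2/3}). -/
set_option maxHeartbeats 1000000

open Real

private lemma cube3 (x : ℝ) (hx : 0 ≤ x) : (x ^ ((1:ℝ)/3)) ^ (3:ℕ) = x := by
  rw [← Real.rpow_natCast (x ^ ((1:ℝ)/3)) 3, ← Real.rpow_mul hx]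
  norm_num

private lemma r23 (x : ℝ) (hx : 0 ≤ x) : x ^ ((2:ℝ)/3) = (x ^ ((1:ℝ)/3)) ^ (2:ℕ) := by
  rw [← Real.rpow_natCast (x ^ ((1:ℝ)/3)) 2, ← Real.rpow_mul hx]
  norm_num

private lemma r43 (x : ℝ) (hx : 0 ≤ x) : x ^ ((4:ℝ)/3) = (x ^ ((1:ℝ)/3)) ^ (4:ℕ) := by
  rw [← Real.rpow_natCast (x ^ ((1:ℝ)/3)) 4, ← Real.rpow_mul hx]
  norm_num

private lemma mono3 {u v : ℝ} (hv : 0 ≤ v) (h : u ^ 3 ≤ v ^ 3) : u ≤ v :=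
  le_of_pow_le_pow_left₀ (by norm_num) hv h

private lemma cube_add (x y : ℝ) (hx : 0 ≤ x) (hy : 0 ≤ y) : x ^ 3 + y ^ 3 ≤ (x + y) ^ 3 := by
  nlinarith [mul_nonneg hx hy, mul_nonneg (mul_nonneg hx hy) (add_nonneg hx hy)]

/-- convexity upper tangent bound for `x^{4/3}` in cube-root variables -/
private lemma lem_B1 (P S g : ℝ) (hP : 0 ≤ P) (h : S ^ 3 = P ^ 3 + g ^ 3) (hSP : P ≤ S) :
    S ^ 4 - P ^ 4 ≤ 4/3 * g ^ 3 * S := by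
  nlinarith [mul_nonneg (sq_nonneg (S - P))
    (by nlinarith [sq_nonneg (S+P), sq_nonneg P] : (0:ℝ) ≤ S^2 + 2*P*S + 3*P^2)]

/-- convexity lower tangent bound for `x^{4/3}` in cube-root variables -/
private lemma lem_B2 (Q b g : ℝ) (hb : 0 ≤ b) (h : Q ^ 3 = b ^ 3 + g ^ 3) (hbQ : b ≤ Q) :
    4/3 * g ^ 3 * b ≤ Q ^ 4 - b ^ 4 := by
  nlinarith [mul_nonneg (sq_nonneg (Q - b))
    (by nlinarith [sq_nonneg (Q+b), sq_nonneg Q] : (0:ℝ) ≤ 3*Q^2 + 2*Q*b + b^2)]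

/-- decreasing increments of the concave function `x^{2/3}` in cube-root variables -/
private lemma lem_A (al ga P Q : ℝ) (hal : 0 ≤ al) (hga : 0 ≤ ga) (hgal : ga ≤ al)
    (hP0 : 0 ≤ P) (hQ0 : 0 ≤ Q) (hPa : al ≤ P) (hQc : ga ≤ Q)
    (hEq : (P - Q) * (P^2 + P*Q + Q^2) - (al - ga) * (al^2 + al*ga + ga^2) = 0) :
    P ^ 2 - Q ^ 2 ≤ al ^ 2 - ga ^ 2 := by
  have hSig : 0 ≤ (al + ga) * (P^2 + P*Q + Q^2) - (P + Q) * (al^2 + al*ga + ga^2) := by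
    nlinarith [mul_nonneg hga (sq_nonneg (Q - ga)),
      mul_nonneg (mul_nonneg hga (sub_nonneg.2 hPa)) (sub_nonneg.2 hQc),
      mul_nonneg hga (sq_nonneg (P - al)), mul_nonneg (mul_nonneg hga hga) (sub_nonneg.2 hQc),
      mul_nonneg hal (sq_nonneg (Q - ga)),
      mul_nonneg (mul_nonneg hal (sub_nonneg.2 hPa)) (sub_nonneg.2 hQc),
      mul_nonneg hal (sq_nonneg (P - al)), mul_nonneg (mul_nonneg hal hga) (sub_nonneg.2 hQc),
      mul_nonneg (mul_nonneg hal hga) (sub_nonneg.2 hPa),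
      mul_nonneg (mul_nonneg hal hal) (sub_nonneg.2 hPa)]
  have hW : ((al^2 - ga^2) - (P^2 - Q^2)) * (P^2 + P*Q + Q^2)
      = (al - ga) * ((al + ga) * (P^2 + P*Q + Q^2) - (P + Q) * (al^2 + al*ga + ga^2)) := by
    linear_combination (-(P + Q)) * hEq
  rcases eq_or_lt_of_le (by positivity : (0:ℝ) ≤ P^2 + P*Q + Q^2) with h0 | h0
  · have hP' : P = 0 := by nlinarith [sq_nonneg P, sq_nonneg Q, mul_nonneg hP0 hQ0]
    have hQ' : Q = 0 := by nlinarith [sq_nonneg P, sq_nonneg Q, mul_nonneg hP0 hQ0]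
    rw [hP', hQ']
    nlinarith [mul_nonneg (sub_nonneg.2 hgal) (add_nonneg hal hga)]
  · have h1 : 0 ≤ ((al^2 - ga^2) - (P^2 - Q^2)) * (P^2 + P*Q + Q^2) := by
      rw [hW]; exact mul_nonneg (sub_nonneg.2 hgal) hSig
    nlinarith [h1, h0]

private lemma lem_D (al ga be S P Q R : ℝ) (hga : 0 ≤ ga) (hal : 0 ≤ al) (hgal : ga ≤ al)
    (hB1 : S ^ 4 - P ^ 4 ≤ 4/3 * ga ^ 3 * S)
    (hB2 : 4/3 * ga ^ 3 * be ≤ Q ^ 4 - be ^ 4)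
    (hSbR : S ≤ be + R) (hRal : R ≤ 51/40 * al) :
    S ^ 4 + be ^ 4 - P ^ 4 - Q ^ 4 ≤ 17/10 * al ^ 2 * ga ^ 2 := by
  have h3 : (0:ℝ) ≤ ga ^ 3 := by positivity
  have e1 : ga ^ 3 * (S - be) ≤ ga ^ 3 * R := mul_le_mul_of_nonneg_left (by linarith) h3
  have e2 : ga ^ 3 * R ≤ ga ^ 3 * (51/40 * al) := mul_le_mul_of_nonneg_left hRal h3
  have e3 : ga ^ 3 * al ≤ ga ^ 2 * al ^ 2 := by
    nlinarith [mul_le_mul_of_nonneg_left hgal (mul_nonneg (mul_nonneg hga hga) hal)]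
  nlinarith [hB1, hB2, e1, e2, e3]

private lemma lem_mu (al ga be S P Q : ℝ)
    (hD : S ^ 4 + be ^ 4 - P ^ 4 - Q ^ 4 ≤ 17/10 * al ^ 2 * ga ^ 2)
    (hsq : (P ^ 2 - Q ^ 2) ^ 2 ≤ (al ^ 2 - ga ^ 2) ^ 2) :
    S ^ 4 + be ^ 4 - al ^ 4 - ga ^ 4 ≤ 2 * (P^2 * Q^2) - 3/10 * (al^2 * ga^2) := by
  nlinarith [hD, hsq]

private lemma lem_mu0 (al ga be S : ℝ) (hal : 0 ≤ al) (hga : 0 ≤ ga) (hbe : 0 ≤ be) (hS : 0 ≤ S)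
    (hS3 : S ^ 3 = al ^ 3 + be ^ 3 + ga ^ 3) (hSal : al ≤ S) (hSga : ga ≤ S) :
    0 ≤ S ^ 4 + be ^ 4 - al ^ 4 - ga ^ 4 := by
  have hS4 : S ^ 4 = S * al ^ 3 + S * be ^ 3 + S * ga ^ 3 := by linear_combination S * hS3
  nlinarith [mul_le_mul_of_nonneg_right hSal (by positivity : (0:ℝ) ≤ al^3),
    mul_le_mul_of_nonneg_right hSga (by positivity : (0:ℝ) ≤ ga^3),
    mul_nonneg hS (by positivity : (0:ℝ) ≤ be^3), pow_nonneg hbe 4]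

private lemma lem_final (ε al ga be S P Q : ℝ) (hε : 0 < ε)
    (hmu : S ^ 4 + be ^ 4 - al ^ 4 - ga ^ 4 ≤ 2 * (P^2 * Q^2) - 3/10 * (al^2 * ga^2))
    (hmu0 : 0 ≤ S ^ 4 + be ^ 4 - al ^ 4 - ga ^ 4)
    (hT : al ^ 2 * ga ^ 2 ≤ P ^ 2 * Q ^ 2) :
    (ε + P ^ 4) * (ε + Q ^ 4) - (1 / 2 * (S ^ 4 + be ^ 4 - al ^ 4 - ga ^ 4)) ^ 2
      ≥ 3/20 * P ^ 2 * Q ^ 2 * (ε + al ^ 2 * ga ^ 2) := by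
  have hT0 : (0:ℝ) ≤ al ^ 2 * ga ^ 2 := by positivity
  have hmusq : (1 / 2 * (S ^ 4 + be ^ 4 - al ^ 4 - ga ^ 4)) ^ 2
      ≤ (P^2 * Q^2 - 3/20 * (al^2 * ga^2)) ^ 2 := by
    apply pow_le_pow_left₀ (by linarith) (by linarith)
  nlinarith [hmusq, mul_nonneg hε.le (sq_nonneg (P^2 - Q^2)),
    mul_nonneg hε.le (mul_nonneg (sq_nonneg P) (sq_nonneg Q)), sq_nonneg ε,
    mul_nonneg (sub_nonneg.2 hT) hT0]

private lemma key (ε : ℝ) (hε : 0 < ε) (a b c : ℝ) (ha : 0 ≤ a) (hb : 0 ≤ b)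
    (hc : 0 ≤ c) (hca : c ≤ a) :
    (ε + (a + b) ^ ((4 : ℝ) / 3)) * (ε + (b + c) ^ ((4 : ℝ) / 3))
          - ((1 / 2) * ((a + b + c) ^ ((4 : ℝ) / 3) + b ^ ((4 : ℝ) / 3)
              - a ^ ((4 : ℝ) / 3) - c ^ ((4 : ℝ) / 3))) ^ 2
        ≥ (3/20 : ℝ) * (a + b) ^ ((2 : ℝ) / 3) * (b + c) ^ ((2 : ℝ) / 3)
            * (ε + (a * c) ^ ((2 : ℝ) / 3)) := by
  set al := a ^ ((1:ℝ)/3) with hal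
  set be := b ^ ((1:ℝ)/3) with hbe
  set ga := c ^ ((1:ℝ)/3) with hga
  set P := (a + b) ^ ((1:ℝ)/3) with hP
  set Q := (b + c) ^ ((1:ℝ)/3) with hQ
  set S := (a + b + c) ^ ((1:ℝ)/3) with hS
  set R := (a + c) ^ ((1:ℝ)/3) with hR
  have hab : (0:ℝ) ≤ a + b := by linarith
  have hbc : (0:ℝ) ≤ b + c := by linarith
  have habc : (0:ℝ) ≤ a + b + c := by linarith
  have hac : (0:ℝ) ≤ a + c := by linarith
  have hal0 : 0 ≤ al := Real.rpow_nonneg ha _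
  have hbe0 : 0 ≤ be := Real.rpow_nonneg hb _
  have hga0 : 0 ≤ ga := Real.rpow_nonneg hc _
  have hP0 : 0 ≤ P := Real.rpow_nonneg hab _
  have hQ0 : 0 ≤ Q := Real.rpow_nonneg hbc _
  have hS0 : 0 ≤ S := Real.rpow_nonneg habc _
  have hR0 : 0 ≤ R := Real.rpow_nonneg hac _
  have hal3 : al ^ 3 = a := cube3 a ha
  have hbe3 : be ^ 3 = b := cube3 b hb
  have hga3 : ga ^ 3 = c := cube3 c hc
  have hP3 : P ^ 3 = a + b := cube3 _ hab
  have hQ3 : Q ^ 3 = b + c := cube3 _ hbc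
  have hS3 : S ^ 3 = a + b + c := cube3 _ habc
  have hR3 : R ^ 3 = a + c := cube3 _ hac
  have hmul : (a * c) ^ ((2:ℝ)/3) = al ^ 2 * ga ^ 2 := by
    rw [Real.mul_rpow ha hc, r23 a ha, r23 c hc]
  rw [r43 _ hab, r43 _ hbc, r43 _ habc, r43 _ hb, r43 _ ha, r43 _ hc,
    r23 _ hab, r23 _ hbc, hmul]
  -- monotonicity facts
  have hPa : al ≤ P := mono3 hP0 (by rw [hal3, hP3]; linarith)
  have hQc : ga ≤ Q := mono3 hQ0 (by rw [hga3, hQ3]; linarith)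
  have hQb : be ≤ Q := mono3 hQ0 (by rw [hbe3, hQ3]; linarith)
  have hSP : P ≤ S := mono3 hS0 (by rw [hP3, hS3]; linarith)
  have hQP : Q ≤ P := mono3 hP0 (by rw [hQ3, hP3]; linarith)
  have hgal : ga ≤ al := mono3 hal0 (by rw [hga3, hal3]; linarith)
  have hSal : al ≤ S := mono3 hS0 (by rw [hal3, hS3]; linarith)
  have hSga : ga ≤ S := mono3 hS0 (by rw [hga3, hS3]; linarith)
  have hSbR : S ≤ be + R := by
    apply mono3 (by positivity)
    rw [hS3]
    have h1 := cube_add be R hbe0 hR0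
    rw [hbe3, hR3] at h1
    linarith
  have hRal : R ≤ 51/40 * al := by
    apply mono3 (by positivity)
    have h2 : ((51:ℝ)/40 * al) ^ 3 = 132651/64000 * a := by
      rw [show ((51:ℝ)/40 * al) ^ 3 = 132651/64000 * al ^ 3 by ring, hal3]
    rw [hR3, h2]
    linarith
  -- tangent bounds and D bound
  have hB1 : S ^ 4 - P ^ 4 ≤ 4/3 * ga ^ 3 * S :=
    lem_B1 P S ga hP0 (by rw [hS3, hP3, hga3]) hSP
  have hB2 : 4/3 * ga ^ 3 * be ≤ Q ^ 4 - be ^ 4 :=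
    lem_B2 Q be ga hbe0 (by rw [hQ3, hbe3, hga3]) hQb
  have hD : S ^ 4 + be ^ 4 - P ^ 4 - Q ^ 4 ≤ 17/10 * al ^ 2 * ga ^ 2 :=
    lem_D al ga be S P Q R hga0 hal0 hgal hB1 hB2 hSbR hRal
  -- concave-increment bound
  have hA : P ^ 2 - Q ^ 2 ≤ al ^ 2 - ga ^ 2 := by
    apply lem_A al ga P Q hal0 hga0 hgal hP0 hQ0 hPa hQc
    linear_combination hP3 - hQ3 - hal3 + hga3
  have hA0 : 0 ≤ P ^ 2 - Q ^ 2 := sub_nonneg.2 (pow_le_pow_left₀ hQ0 hQP 2)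
  have hsq : (P ^ 2 - Q ^ 2) ^ 2 ≤ (al ^ 2 - ga ^ 2) ^ 2 := pow_le_pow_left₀ hA0 hA 2
  have hmu : S ^ 4 + be ^ 4 - al ^ 4 - ga ^ 4 ≤ 2 * (P^2 * Q^2) - 3/10 * (al^2 * ga^2) :=
    lem_mu al ga be S P Q hD hsq
  have hmu0 : 0 ≤ S ^ 4 + be ^ 4 - al ^ 4 - ga ^ 4 :=
    lem_mu0 al ga be S hal0 hga0 hbe0 hS0 (by rw [hS3, hal3, hbe3, hga3]) hSal hSga
  have hT : al ^ 2 * ga ^ 2 ≤ P ^ 2 * Q ^ 2 :=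
    mul_le_mul (pow_le_pow_left₀ hal0 hPa 2) (pow_le_pow_left₀ hga0 hQc 2)
      (by positivity) (by positivity)
  exact lem_final ε al ga be S P Q hε hmu hmu0 hT

/-- **Determinant lower bound** used for the `V₁` term (configuration `r < r' < s < s'`,
`H = 2/3`): there is a universal constant `C > 0` such that for all `ε > 0` and
`a, b, c ≥ 0`, with `μ = (1/2)((a+b+c)^{4/3} + b^{4/3} − a^{4/3} − c^{4/3})`,
`(ε + (a+b)^{4/3})(ε + (b+c)^{4/3}) − μ² ≥ C (a+b)^{2/3} (b+c)^{2/3} (ε + (ac)^{2/3})`. -/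
theorem det_lower_bound :
    ∃ C : ℝ, 0 < C ∧ ∀ ε : ℝ, 0 < ε → ∀ a b c : ℝ, 0 ≤ a → 0 ≤ b → 0 ≤ c →
      (ε + (a + b) ^ ((4 : ℝ) / 3)) * (ε + (b + c) ^ ((4 : ℝ) / 3))
          - ((1 / 2) * ((a + b + c) ^ ((4 : ℝ) / 3) + b ^ ((4 : ℝ) / 3)
              - a ^ ((4 : ℝ) / 3) - c ^ ((4 : ℝ) / 3))) ^ 2
        ≥ C * (a + b) ^ ((2 : ℝ) / 3) * (b + c) ^ ((2 : ℝ) / 3)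
            * (ε + (a * c) ^ ((2 : ℝ) / 3)) := by
  refine ⟨3/20, by norm_num, fun ε hε a b c ha hb hc => ?_⟩
  rcases le_total c a with h | h
  · exact key ε hε a b c ha hb hc h
  · have h1 := key ε hε c b a hc hb ha h
    rw [show c + b + a = a + b + c by ring, show c + b = b + c by ring,
      show b + a = a + b by ring, show c * a = a * c by ring] at h1
    linarith [h1]
end
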